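/- Let ε > 0 and let D = (V,E) be a directed graph with n vertices and m edges such that every vertex has total degree at most (ε²/4)·m. Then there exists a bipartition V = V1 ∪ V2 such that both e(V1,V2) ≥ (1/4 − ε)m and e(V2,V1) ≥ (1/4 − ε)m. -/

import Mathlib

open Finset

section helpers
variable {V : Type*} [Fintype V] [DecidableEq V]

/-- Flip-one-coordinate involution: sum of (centered) crossing indicator is zero. -/
lemma flipsum1 {a b : V} (hab : a ≠ b) :
    ∑ σ : V → Bool, ((if σ a ≠ σ b then (1:ℝ) else 0) - 1/2) = 0 := by
  apply Finset.sum_ninvolution (fun σ => Function.update σ a (!σ a))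
  · intro σ
    have h1 : Function.update σ a (!σ a) a = !σ a := Function.update_self _ _ _
    have h2 : Function.update σ a (!σ a) b = σ b := Function.update_of_ne hab.symm _ _
    rw [h1, h2]
    cases σ a <;> cases σ b <;> norm_num
  · intro σ _ hc
    have := congrFun hc a
    simp at this
  · intro σ; exact mem_univ _
  · intro σ
    funext v
    by_cases hv : v = a
    · subst hv; simp
    · simp [Function.update_of_ne hv]

/-- Flip-two-coordinates involution: product of an antisymmetric local function with
a function on disjoint coordinates sums to zero. -/
lemma flipsum2 {a b c d : V} (hca : c ≠ a) (hcb : c ≠ b) (hda : d ≠ a) (hdb : d ≠ b)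
    (F G : Bool → Bool → ℝ) (hF : ∀ x y, F (!x) (!y) = - F x y) :
    ∑ σ : V → Bool, F (σ a) (σ b) * G (σ c) (σ d) = 0 := by
  apply Finset.sum_ninvolution (fun σ v => if v = a ∨ v = b then !σ v else σ v)
  · intro σ
    have ha' : (if a = a ∨ a = b then !σ a else σ a) = !σ a := by simp
    have hb' : (if b = a ∨ b = b then !σ b else σ b) = !σ b := by simp
    have hc' : (if c = a ∨ c = b then !σ c else σ c) = σ c := by simp [hca, hcb]
    have hd' : (if d = a ∨ d = b then !σ d else σ d) = σ d := by simp [hda, hdb]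
    simp only [show (a = a ∨ a = b) = True by simp, show (b = a ∨ b = b) = True by simp,
      show (c = a ∨ c = b) = False by simp [hca, hcb], show (d = a ∨ d = b) = False by simp [hda, hdb],
      true_or, or_true, if_true, if_false, hF]
    ring
  · intro σ _ hc
    have := congrFun hc a
    simp at this
  · intro σ; exact mem_univ _
  · intro σ
    funext v
    by_cases hv : v = a ∨ v = b <;> simp [hv]

end helpers


/-- The number of directed edges from `X` to `Y`. -/
def eCount {V : Type*} [DecidableEq V] (E : V → V → Prop) [DecidableRel E]
    (X Y : Finset V) : ℕ :=
  ((X ×ˢ Y).filter fun p => E p.1 p.2).card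

/-- Outdegree of `v`. -/
def outDeg {V : Type*} [Fintype V] (E : V → V → Prop) [DecidableRel E] (v : V) : ℕ :=
  (Finset.univ.filter fun w => E v w).card

/-- Indegree of `v`. -/
def inDeg {V : Type*} [Fintype V] (E : V → V → Prop) [DecidableRel E] (v : V) : ℕ :=
  (Finset.univ.filter fun w => E w v).card

/-- Total degree of `v`. -/
def totDeg {V : Type*} [Fintype V] (E : V → V → Prop) [DecidableRel E] (v : V) : ℕ :=
  inDeg E v + outDeg E v

/-- If every vertex of a directed graph with `m` edges has total degree at most
`(ε²/4)·m`, then there is a bipartition `V = V₁ ∪ V₂` with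
`e(V₁,V₂) ≥ (1/4 - ε)m` and `e(V₂,V₁) ≥ (1/4 - ε)m`. -/
theorem stmt5 {V : Type*} [Fintype V] [DecidableEq V]
    (E : V → V → Prop) [DecidableRel E] (hirr : ∀ v, ¬ E v v)
    (ε : ℝ) (hε : 0 < ε)
    (m : ℕ) (hm : m = eCount E Finset.univ Finset.univ)
    (hdeg : ∀ v : V, (totDeg E v : ℝ) ≤ ε ^ 2 / 4 * m) :
    ∃ V1 : Finset V,
      (eCount E V1 V1ᶜ : ℝ) ≥ (1 / 4 - ε) * m ∧
      (eCount E V1ᶜ V1 : ℝ) ≥ (1 / 4 - ε) * m := by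
    classical
  set n := Fintype.card V with hn
  set edges : Finset (V × V) := (univ ×ˢ univ).filter (fun p => E p.1 p.2) with hedges
  have hmcard : m = edges.card := hm
  have hEdge : ∀ p ∈ edges, E p.1 p.2 := fun p hp => (mem_filter.mp hp).2
  have hne : ∀ p ∈ edges, p.1 ≠ p.2 := by
    intro p hp h
    have := hEdge p hp
    rw [← h] at this
    exact hirr p.1 this
  -- the random set
  set S : (V → Bool) → Finset V := fun σ => univ.filter (fun v => σ v = true) with hS
  set c1 : (V → Bool) → ℝ := fun σ => (eCount E (S σ) (S σ)ᶜ : ℝ) with hc1def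
  set c2 : (V → Bool) → ℝ := fun σ => (eCount E (S σ)ᶜ (S σ) : ℝ) with hc2def
  have hc1 : ∀ σ : V → Bool, c1 σ
      = ∑ p ∈ edges, (if σ p.1 = true ∧ σ p.2 = false then (1:ℝ) else 0) := by
    intro σ
    have hset : ((S σ ×ˢ (S σ)ᶜ).filter fun p => E p.1 p.2)
        = edges.filter (fun p => σ p.1 = true ∧ σ p.2 = false) := by
      ext p
      simp only [hedges, hS, mem_filter, mem_product, Finset.mem_compl, mem_univ, true_and,
        Bool.not_eq_true]
      tauto
    rw [hc1def]
    simp only [eCount, hset, Finset.card_filter]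
    push_cast
    exact Finset.sum_congr rfl fun p _ => by split <;> norm_num
  have hc2 : ∀ σ : V → Bool, c2 σ
      = ∑ p ∈ edges, (if σ p.1 = false ∧ σ p.2 = true then (1:ℝ) else 0) := by
    intro σ
    have hset : (((S σ)ᶜ ×ˢ S σ).filter fun p => E p.1 p.2)
        = edges.filter (fun p => σ p.1 = false ∧ σ p.2 = true) := by
      ext p
      simp only [hedges, hS, mem_filter, mem_product, Finset.mem_compl, mem_univ, true_and,
        Bool.not_eq_true]
      tauto
    rw [hc2def]
    simp only [eCount, hset, Finset.card_filter]
    push_cast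
    exact Finset.sum_congr rfl fun p _ => by split <;> norm_num
  have hNpos : (0:ℝ) < 2 ^ n := by positivity
  -- first moment
  have hcount : ∀ a b : V, a ≠ b →
      ∑ σ : V → Bool, (if σ a ≠ σ b then (1:ℝ) else 0) = 2 ^ n / 2 := by
    intro a b hab
    have h0 := flipsum1 (V := V) hab
    rw [Finset.sum_sub_distrib] at h0
    have h1 : ∑ _σ : V → Bool, (1/2 : ℝ) = 2 ^ n / 2 := by
      rw [Finset.sum_const, Finset.card_univ]
      rw [show Fintype.card (V → Bool) = 2 ^ n by simp [hn, Fintype.card_fun]]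
      push_cast [nsmul_eq_mul]
      ring
    linarith
  have hsum1 : ∑ σ : V → Bool, (c1 σ + c2 σ) = m * (2 ^ n / 2) := by
    have : ∀ σ : V → Bool, c1 σ + c2 σ
        = ∑ p ∈ edges, (if σ p.1 ≠ σ p.2 then (1:ℝ) else 0) := by
      intro σ
      rw [hc1, hc2, ← Finset.sum_add_distrib]
      refine Finset.sum_congr rfl fun p _ => ?_
      cases h1 : σ p.1 <;> cases h2 : σ p.2 <;> norm_num
    rw [Finset.sum_congr rfl fun σ _ => this σ, Finset.sum_comm]
    rw [Finset.sum_congr rfl fun p hp => hcount p.1 p.2 (hne p hp)]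
    rw [Finset.sum_const, hmcard, nsmul_eq_mul]
  -- the difference
  set Fd : Bool → Bool → ℝ := fun x y =>
    (if x = true ∧ y = false then 1 else 0) - (if x = false ∧ y = true then 1 else 0) with hFd
  have hFd_anti : ∀ x y, Fd (!x) (!y) = - Fd x y := by
    intro x y; cases x <;> cases y <;> simp [hFd]
  have hFd_bound : ∀ x y u w, Fd x y * Fd u w ≤ 1 := by
    intro x y u w; cases x <;> cases y <;> cases u <;> cases w <;> norm_num [hFd]
  have hDeq : ∀ σ : V → Bool, c1 σ - c2 σ = ∑ p ∈ edges, Fd (σ p.1) (σ p.2) := by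
    intro σ
    rw [hc1, hc2, ← Finset.sum_sub_distrib]
  -- bad pairs count
  have hbad : ∀ p ∈ edges,
      ((edges.filter fun q : V × V =>
        q.1 = p.1 ∨ q.1 = p.2 ∨ q.2 = p.1 ∨ q.2 = p.2).card : ℝ)
      ≤ ε ^ 2 / 2 * m := by
    intro p hp
    have cardOut : ∀ v : V, (edges.filter fun q : V × V => q.1 = v).card ≤ outDeg E v := by
      intro v
      rw [outDeg]
      apply Finset.card_le_card_of_injOn (fun q => q.2)
      · intro q hq
        rw [mem_coe, mem_filter] at hq
        rw [mem_coe, mem_filter]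
        exact ⟨mem_univ _, hq.2 ▸ hEdge q hq.1⟩
      · intro q hq q' hq' hqq
        simp only [coe_filter, Set.mem_setOf_eq] at hq hq'
        exact Prod.ext (hq.2.trans hq'.2.symm) hqq
    have cardIn : ∀ v : V, (edges.filter fun q : V × V => q.2 = v).card ≤ inDeg E v := by
      intro v
      rw [inDeg]
      apply Finset.card_le_card_of_injOn (fun q => q.1)
      · intro q hq
        rw [mem_coe, mem_filter] at hq
        rw [mem_coe, mem_filter]
        exact ⟨mem_univ _, hq.2 ▸ hEdge q hq.1⟩
      · intro q hq q' hq' hqq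
        simp only [coe_filter, Set.mem_setOf_eq] at hq hq'
        exact Prod.ext hqq (hq.2.trans hq'.2.symm)
    have hsplit : (edges.filter fun q : V × V =>
          q.1 = p.1 ∨ q.1 = p.2 ∨ q.2 = p.1 ∨ q.2 = p.2).card
        ≤ totDeg E p.1 + totDeg E p.2 := by
      calc (edges.filter fun q : V × V =>
            q.1 = p.1 ∨ q.1 = p.2 ∨ q.2 = p.1 ∨ q.2 = p.2).card
          ≤ (edges.filter fun q : V × V => q.1 = p.1).card
            + (edges.filter fun q : V × V => q.1 = p.2).card
            + (edges.filter fun q : V × V => q.2 = p.1).card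
            + (edges.filter fun q : V × V => q.2 = p.2).card := by
            rw [Finset.filter_or, Finset.filter_or, Finset.filter_or]
            have h1 := Finset.card_union_le (edges.filter fun q : V × V => q.1 = p.1)
              ((edges.filter fun q : V × V => q.1 = p.2)
                ∪ ((edges.filter fun q : V × V => q.2 = p.1)
                  ∪ (edges.filter fun q : V × V => q.2 = p.2)))
            have h2 := Finset.card_union_le (edges.filter fun q : V × V => q.1 = p.2)
              ((edges.filter fun q : V × V => q.2 = p.1)
                ∪ (edges.filter fun q : V × V => q.2 = p.2))
            have h3 := Finset.card_union_le (edges.filter fun q : V × V => q.2 = p.1)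
              (edges.filter fun q : V × V => q.2 = p.2)
            omega
        _ ≤ totDeg E p.1 + totDeg E p.2 := by
            have := cardOut p.1; have := cardOut p.2
            have := cardIn p.1; have := cardIn p.2
            simp only [totDeg]; omega
    calc ((edges.filter fun q : V × V =>
          q.1 = p.1 ∨ q.1 = p.2 ∨ q.2 = p.1 ∨ q.2 = p.2).card : ℝ)
        ≤ (totDeg E p.1 : ℝ) + totDeg E p.2 := by exact_mod_cast Nat.cast_le.mpr hsplit
      _ ≤ ε ^ 2 / 4 * m + ε ^ 2 / 4 * m := add_le_add (hdeg p.1) (hdeg p.2)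
      _ = ε ^ 2 / 2 * m := by ring
  -- second moment
  have hsum2 : ∑ σ : V → Bool, (c1 σ - c2 σ) ^ 2 ≤ 2 ^ n * (ε ^ 2 * m ^ 2 / 2) := by
    have expand : ∀ σ : V → Bool, (c1 σ - c2 σ) ^ 2
        = ∑ p ∈ edges, ∑ q ∈ edges, Fd (σ p.1) (σ p.2) * Fd (σ q.1) (σ q.2) := by
      intro σ
      rw [hDeq, sq, Finset.sum_mul_sum]
    rw [Finset.sum_congr rfl fun σ _ => expand σ, Finset.sum_comm]
    have swap2 : ∀ p : V × V, ∑ σ : V → Bool, ∑ q ∈ edges,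
        Fd (σ p.1) (σ p.2) * Fd (σ q.1) (σ q.2)
        = ∑ q ∈ edges, ∑ σ : V → Bool,
        Fd (σ p.1) (σ p.2) * Fd (σ q.1) (σ q.2) := fun p => Finset.sum_comm
    rw [Finset.sum_congr rfl fun p _ => swap2 p]
    have inner_bound : ∀ p ∈ edges, ∑ q ∈ edges, ∑ σ : V → Bool,
        Fd (σ p.1) (σ p.2) * Fd (σ q.1) (σ q.2) ≤ ε ^ 2 / 2 * m * 2 ^ n := by
      intro p hp
      rw [← Finset.sum_filter_add_sum_filter_not edges
        (fun q : V × V => q.1 = p.1 ∨ q.1 = p.2 ∨ q.2 = p.1 ∨ q.2 = p.2)]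
      have good : ∑ q ∈ edges.filter (fun q : V × V =>
          ¬(q.1 = p.1 ∨ q.1 = p.2 ∨ q.2 = p.1 ∨ q.2 = p.2)),
          ∑ σ : V → Bool, Fd (σ p.1) (σ p.2) * Fd (σ q.1) (σ q.2) = 0 := by
        apply Finset.sum_eq_zero
        intro q hq
        rw [mem_filter] at hq
        push_neg at hq
        obtain ⟨-, h1, h2, h3, h4⟩ := hq
        exact flipsum2 h1 h2 h3 h4 Fd Fd hFd_anti
      rw [good, add_zero]
      calc ∑ q ∈ edges.filter (fun q : V × V =>
            q.1 = p.1 ∨ q.1 = p.2 ∨ q.2 = p.1 ∨ q.2 = p.2),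
            ∑ σ : V → Bool, Fd (σ p.1) (σ p.2) * Fd (σ q.1) (σ q.2)
          ≤ ∑ _q ∈ edges.filter (fun q : V × V =>
            q.1 = p.1 ∨ q.1 = p.2 ∨ q.2 = p.1 ∨ q.2 = p.2), ((2:ℝ) ^ n) := by
            refine Finset.sum_le_sum fun q _ => ?_
            calc ∑ σ : V → Bool, Fd (σ p.1) (σ p.2) * Fd (σ q.1) (σ q.2)
                ≤ ∑ _σ : V → Bool, (1:ℝ) := Finset.sum_le_sum fun σ _ => hFd_bound _ _ _ _
              _ = 2 ^ n := by
                  rw [Finset.sum_const, Finset.card_univ,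
                    show Fintype.card (V → Bool) = 2 ^ n by simp [hn, Fintype.card_fun],
                    nsmul_eq_mul]
                  push_cast; ring
        _ = ((edges.filter fun q : V × V =>
            q.1 = p.1 ∨ q.1 = p.2 ∨ q.2 = p.1 ∨ q.2 = p.2).card : ℝ) * 2 ^ n := by
            rw [Finset.sum_const, nsmul_eq_mul]
        _ ≤ ε ^ 2 / 2 * m * 2 ^ n :=
            mul_le_mul_of_nonneg_right (hbad p hp) hNpos.le
    calc ∑ p ∈ edges, ∑ q ∈ edges, ∑ σ : V → Bool,
          Fd (σ p.1) (σ p.2) * Fd (σ q.1) (σ q.2)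
        ≤ ∑ _p ∈ edges, (ε ^ 2 / 2 * m * 2 ^ n) := Finset.sum_le_sum inner_bound
      _ = m * (ε ^ 2 / 2 * m * 2 ^ n) := by rw [Finset.sum_const, hmcard, nsmul_eq_mul]
      _ = 2 ^ n * (ε ^ 2 * m ^ 2 / 2) := by ring
  -- Cauchy-Schwarz
  have hcardfun : (Finset.univ : Finset (V → Bool)).card = 2 ^ n := by
    rw [Finset.card_univ]; simp [hn, Fintype.card_fun]
  have hA : ∑ σ : V → Bool, |c1 σ - c2 σ| ≤ 2 ^ n * (ε * m) := by
    have cs := Finset.sum_mul_sq_le_sq_mul_sq Finset.univ (fun _ : V → Bool => (1:ℝ))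
      (fun σ => |c1 σ - c2 σ|)
    simp only [one_mul, one_pow, sq_abs] at cs
    rw [Finset.sum_const, hcardfun, nsmul_eq_mul, mul_one] at cs
    push_cast at cs
    have h1 : (∑ σ : V → Bool, |c1 σ - c2 σ|) ^ 2 ≤ ((2:ℝ)^n * (ε * m))^2 := by
      calc (∑ σ : V → Bool, |c1 σ - c2 σ|) ^ 2
          ≤ (2^n : ℝ) * ∑ σ : V → Bool, (c1 σ - c2 σ)^2 := cs
        _ ≤ 2^n * (2^n * (ε^2 * m^2 / 2)) :=
            mul_le_mul_of_nonneg_left hsum2 hNpos.le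
        _ ≤ ((2:ℝ)^n * (ε * m))^2 := by nlinarith [sq_nonneg ((2:ℝ)^n * ε * m)]
    have hAnn : 0 ≤ ∑ σ : V → Bool, |c1 σ - c2 σ| :=
      Finset.sum_nonneg fun σ _ => abs_nonneg _
    have hBnn : (0:ℝ) ≤ 2^n * (ε * m) := by positivity
    nlinarith [h1, hAnn, hBnn]
  -- averaging
  have hmin : ∑ _σ : V → Bool, ((1/4 - ε) * (m:ℝ)) ≤
      ∑ σ : V → Bool, ((c1 σ + c2 σ)/2 - |c1 σ - c2 σ|/2) := by
    have e1 : ∑ σ : V → Bool, ((c1 σ + c2 σ)/2 - |c1 σ - c2 σ|/2)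
        = (∑ σ : V → Bool, (c1 σ + c2 σ))/2 - (∑ σ : V → Bool, |c1 σ - c2 σ|)/2 := by
      rw [Finset.sum_sub_distrib, ← Finset.sum_div, ← Finset.sum_div]
    rw [e1, hsum1, Finset.sum_const, hcardfun, nsmul_eq_mul]
    have hprod : (0:ℝ) ≤ 2^n * (ε * m) := by positivity
    push_cast
    nlinarith [hA, hprod]
  have hnonempty : (Finset.univ : Finset (V → Bool)).Nonempty :=
    ⟨(fun _ => true), mem_univ _⟩
  obtain ⟨σ, -, hσ⟩ := Finset.exists_le_of_sum_le hnonempty hmin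
  have h1 := le_abs_self (c1 σ - c2 σ)
  have h2 := neg_abs_le (c1 σ - c2 σ)
  refine ⟨S σ, ?_, ?_⟩
  · show ((1:ℝ)/4 - ε) * m ≤ c1 σ
    linarith
  · show ((1:ℝ)/4 - ε) * m ≤ c2 σ
    linarith
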